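/- For every 2×2 complex unitary matrix U there exist real numbers α, β, γ, δ such that U = e^{iα} · R_z(β) · S · H · R_z(γ) · H · S† · R_z(δ). -/

import Mathlib

open Matrix Complex

/-- The single-qubit Z-rotation gate `R_z(θ) = [[e^{-iθ/2}, 0], [0, e^{iθ/2}]]`. -/
noncomputable def Rz (θ : ℝ) : Matrix (Fin 2) (Fin 2) ℂ :=
  !![Complex.exp (-(θ / 2 : ℝ) * Complex.I), 0; 0, Complex.exp ((θ / 2 : ℝ) * Complex.I)]

/-- The Hadamard gate `H = (1/√2)·[[1,1],[1,−1]]`. -/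
noncomputable def Hgate : Matrix (Fin 2) (Fin 2) ℂ :=
  ((1 / Real.sqrt 2 : ℝ) : ℂ) • !![1, 1; 1, -1]

/-- The phase gate `S = [[1,0],[0,i]]`. -/
def Sgate : Matrix (Fin 2) (Fin 2) ℂ := !![1, 0; 0, Complex.I]

set_option maxHeartbeats 1000000 in
theorem key (β γ δ : ℝ) :
    Rz β * Sgate * Hgate * Rz γ * Hgate * Sgateᴴ * Rz δ =
    !![Complex.exp (-(((β+δ)/2 : ℝ)) * I) * Real.cos (γ/2),
       -(Complex.exp (-(((β-δ)/2 : ℝ)) * I) * Real.sin (γ/2));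
       Complex.exp ((((β-δ)/2 : ℝ)) * I) * Real.sin (γ/2),
       Complex.exp ((((β+δ)/2 : ℝ)) * I) * Real.cos (γ/2)] := by
  have h2 : ((Real.sqrt 2 : ℝ) : ℂ) * ((Real.sqrt 2 : ℝ) : ℂ) = 2 := by
    norm_cast
    exact Real.mul_self_sqrt (by norm_num)
  have hS : Sgateᴴ = !![1, 0; 0, -Complex.I] := by
    ext i j; fin_cases i <;> fin_cases j <;> simp [Sgate, conjTranspose_apply]
  rw [hS]
  unfold Rz Sgate Hgate
  simp only [smul_mul_assoc, Matrix.mul_smul, Matrix.mul_fin_two, smul_smul]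
  ext i j
  fin_cases i <;> fin_cases j <;>
    · simp only [Matrix.smul_apply, Matrix.cons_val', Matrix.cons_val_zero, Matrix.cons_val_one,
        Matrix.head_cons, Matrix.head_fin_const, Matrix.empty_val', Matrix.cons_val_fin_one,
        smul_eq_mul, Matrix.of_apply]
      rw [Complex.ofReal_cos, Complex.ofReal_sin]
      simp only [Complex.cos, Complex.sin]
      push_cast
      field_simp
      rw [(sq _).trans h2]
      try ring_nf
      try simp only [Complex.exp_add, Complex.I_sq]
      try ring_nf
      try simp only [Complex.exp_add, Complex.I_sq]
      try ring_nf

lemma exp_arg_mul_I' {w : ℂ} (hw : w ≠ 0) :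
    Complex.exp ((w.arg : ℂ) * Complex.I) = w / ‖w‖ := by
  rw [eq_div_iff (by exact_mod_cast (norm_ne_zero_iff.mpr hw)), mul_comm]
  exact Complex.norm_mul_exp_arg_mul_I w

lemma abs_sq_sum_one {u v : ℂ} (h : u * starRingEnd ℂ u + v * starRingEnd ℂ v = 1) :
    (‖u‖)^2 + (‖v‖)^2 = 1 := by
  have h2 : ((Complex.normSq u + Complex.normSq v : ℝ) : ℂ) = ((1 : ℝ) : ℂ) := by
    push_cast
    rw [← Complex.mul_conj, ← Complex.mul_conj]; exact_mod_cast h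
  have h3 := Complex.ofReal_injective h2
  rw [Complex.sq_norm, Complex.sq_norm]; linarith


/-- Every 2×2 complex unitary matrix `U` can be written as
`U = e^{iα} · R_z(β) · S · H · R_z(γ) · H · S† · R_z(δ)` for some real `α, β, γ, δ`. -/
theorem unitary_eq_phase_mul_Rz_S_H_Rz_H_Sdag_Rz
    (U : Matrix (Fin 2) (Fin 2) ℂ) (hU : U * Uᴴ = 1) :
    ∃ α β γ δ : ℝ,
      U = Complex.exp ((α : ℂ) * Complex.I) •
        (Rz β * Sgate * Hgate * Rz γ * Hgate * Sgateᴴ * Rz δ) := by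
  have hU' : Uᴴ * U = 1 := mul_eq_one_comm.mp hU
  set a := U 0 0 with ha
  set b := U 0 1 with hb
  set c := U 1 0 with hc
  set d := U 1 1 with hd
  have e00 : a * starRingEnd ℂ a + b * starRingEnd ℂ b = 1 := by
    have := congrFun (congrFun hU 0) 0
    simpa [Matrix.mul_apply, Fin.sum_univ_two, Matrix.conjTranspose_apply,
      Matrix.one_apply] using this
  have e01 : a * starRingEnd ℂ c + b * starRingEnd ℂ d = 0 := by
    have := congrFun (congrFun hU 0) 1
    simpa [Matrix.mul_apply, Fin.sum_univ_two, Matrix.conjTranspose_apply,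
      Matrix.one_apply] using this
  have e11 : c * starRingEnd ℂ c + d * starRingEnd ℂ d = 1 := by
    have := congrFun (congrFun hU 1) 1
    simpa [Matrix.mul_apply, Fin.sum_univ_two, Matrix.conjTranspose_apply,
      Matrix.one_apply] using this
  have f00 : starRingEnd ℂ a * a + starRingEnd ℂ c * c = 1 := by
    have := congrFun (congrFun hU' 0) 0
    simpa [Matrix.mul_apply, Fin.sum_univ_two, Matrix.conjTranspose_apply,
      Matrix.one_apply] using this
  have g01 : starRingEnd ℂ a * c + starRingEnd ℂ b * d = 0 := by
    have := congrArg (starRingEnd ℂ) e01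
    simpa only [map_add, _root_.map_mul, Complex.conj_conj, map_zero] using this
  have nab : (‖a‖)^2 + (‖b‖)^2 = 1 := abs_sq_sum_one e00
  have ncd : (‖c‖)^2 + (‖d‖)^2 = 1 := by
    exact abs_sq_sum_one e11
  have nac : (‖a‖)^2 + (‖c‖)^2 = 1 := by
    apply abs_sq_sum_one
    linear_combination f00
  have nbc : ‖b‖ = ‖c‖ := by
    nlinarith [norm_nonneg b, norm_nonneg c]
  have nad : ‖a‖ = ‖d‖ := by
    nlinarith [norm_nonneg a, norm_nonneg d]
  set x := a.arg with hx_def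
  set y := if b = 0 then d.arg else (-b).arg with hy_def
  set z := if b = 0 then a.arg else c.arg with hz_def
  refine ⟨(y + z) / 2, z - x, 2 * Real.arccos (‖a‖), y - x, ?_⟩
  rw [key]
  have harc : 2 * Real.arccos (‖a‖) / 2 = Real.arccos (‖a‖) := by ring
  have ha1 : ‖a‖ ≤ 1 := by nlinarith [norm_nonneg b]
  have hcos : Real.cos (2 * Real.arccos (‖a‖) / 2) = ‖a‖ := by
    rw [harc, Real.cos_arccos (by linarith [norm_nonneg a]) ha1]
  have hsin : Real.sin (2 * Real.arccos (‖a‖) / 2) = ‖b‖ := by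
    rw [harc, Real.sin_arccos, show 1 - (‖a‖)^2 = (‖b‖)^2 by linarith]
    exact Real.sqrt_sq (norm_nonneg b)
  rw [hcos, hsin]
  ext i j
  fin_cases i <;> fin_cases j <;>
    simp only [Matrix.smul_apply, Matrix.cons_val', Matrix.cons_val_zero, Matrix.cons_val_one,
      Matrix.head_cons, Matrix.head_fin_const, Matrix.empty_val', Matrix.cons_val_fin_one,
      smul_eq_mul, Matrix.of_apply, Fin.mk_zero, Fin.mk_one]
  · -- (0,0)
    have hcomb : Complex.exp ((((y + z) / 2 : ℝ) : ℂ) * I) *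
        Complex.exp (-(((z - x + (y - x)) / 2 : ℝ) : ℂ) * I) =
        Complex.exp ((x : ℂ) * I) := by
      rw [← Complex.exp_add]; congr 1; push_cast; ring
    rw [← mul_assoc, hcomb, mul_comm]
    exact (Complex.norm_mul_exp_arg_mul_I a).symm
  · -- (0,1)
    have hcomb : Complex.exp ((((y + z) / 2 : ℝ) : ℂ) * I) *
        Complex.exp (-(((z - x - (y - x)) / 2 : ℝ) : ℂ) * I) =
        Complex.exp ((y : ℂ) * I) := by
      rw [← Complex.exp_add]; congr 1; push_cast; ring
    rw [mul_neg, ← mul_assoc, hcomb]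
    by_cases hb0 : b = 0
    · rw [← hb]; simp [hb0]
    · rw [hy_def, if_neg hb0, mul_comm, show ‖b‖ = ‖(-b)‖ by simp,
        Complex.norm_mul_exp_arg_mul_I (-b)]
      ring
  · -- (1,0)
    have hcomb : Complex.exp ((((y + z) / 2 : ℝ) : ℂ) * I) *
        Complex.exp ((((z - x - (y - x)) / 2 : ℝ) : ℂ) * I) =
        Complex.exp ((z : ℂ) * I) := by
      rw [← Complex.exp_add]; congr 1; push_cast; ring
    rw [← mul_assoc, hcomb]
    by_cases hb0 : b = 0
    · have hc0 : c = 0 := by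
        apply norm_eq_zero.mp
        rw [← nbc, hb0]; simp
      rw [← hc]; simp [hc0, hb0]
    · rw [hz_def, if_neg hb0, nbc, mul_comm]
      exact (Complex.norm_mul_exp_arg_mul_I c).symm
  · -- (1,1)
    have hcomb : Complex.exp ((((y + z) / 2 : ℝ) : ℂ) * I) *
        Complex.exp ((((z - x + (y - x)) / 2 : ℝ) : ℂ) * I) =
        Complex.exp (((y + z - x : ℝ) : ℂ) * I) := by
      rw [← Complex.exp_add]; congr 1; push_cast; ring
    rw [← mul_assoc, hcomb]
    by_cases hb0 : b = 0
    · have hyz : y = d.arg := by rw [hy_def, if_pos hb0]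
      have hzz : z = a.arg := by rw [hz_def, if_pos hb0]
      rw [hyz, hzz, show (((d.arg + a.arg - x : ℝ)) : ℂ) = (d.arg : ℂ) by
        rw [hx_def]; push_cast; ring]
      rw [nad, mul_comm]
      exact (Complex.norm_mul_exp_arg_mul_I d).symm
    · by_cases ha0 : a = 0
      · have hd0 : d = 0 := by
          have : ‖d‖ = 0 := by rw [← nad, ha0]; simp
          exact norm_eq_zero.mp this
        rw [← hd, hd0, ha0]
        simp
      · have hc0 : c ≠ 0 := by
          intro h
          apply hb0
          apply norm_eq_zero.mp
          rw [nbc, h]; simp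
        have hyv : y = (-b).arg := by rw [hy_def, if_neg hb0]
        have hzv : z = c.arg := by rw [hz_def, if_neg hb0]
        rw [show (((y + z - x : ℝ)) : ℂ) * I = (y:ℝ) * I + ((z:ℝ) * I + -((x:ℝ) * I)) by
          push_cast; ring, Complex.exp_add, Complex.exp_add, Complex.exp_neg]
        rw [hyv, hzv, hx_def, exp_arg_mul_I' (neg_ne_zero.mpr hb0), exp_arg_mul_I' hc0,
          exp_arg_mul_I' ha0]
        have hA : a * starRingEnd ℂ a = ((‖a‖ : ℝ) : ℂ)^2 := by
          rw [Complex.mul_conj, ← Complex.sq_norm]; push_cast; ring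
        have hB : b * starRingEnd ℂ b = ((‖b‖ : ℝ) : ℂ)^2 := by
          rw [Complex.mul_conj, ← Complex.sq_norm]; push_cast; ring
        have hAne : ((‖a‖ : ℝ) : ℂ) ≠ 0 := by
          exact_mod_cast (norm_ne_zero_iff.mpr ha0)
        have hBne : ((‖b‖ : ℝ) : ℂ) ≠ 0 := by
          exact_mod_cast (norm_ne_zero_iff.mpr hb0)
        have hCne : ((‖c‖ : ℝ) : ℂ) ≠ 0 := by
          exact_mod_cast (norm_ne_zero_iff.mpr hc0)
        have hnbc : ((‖c‖ : ℝ) : ℂ) = ((‖b‖ : ℝ) : ℂ) := by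
          exact_mod_cast nbc.symm
        have habsneg : ‖(-b)‖ = ‖b‖ := by simp
        rw [habsneg, ← hd]
        field_simp
        rw [hnbc]
        linear_combination (a * b) * g01 - (d * a) * hB - (b * c) * hA
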